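/- Let v_1,...,v_N be elements of a commutative ring and fix n with 1 ≤ n ≤ N. Define functions f_0(v) = v and recursively f_i(v_d) = v_d · (C_{i-1} − (n − i) · f_{i-1}(v_d)) where C_i = Σ_{d=1}^{N} f_i(v_d). Then the n-th elementary symmetric polynomial of v_1,...,v_N equals (1/n!) · C_{n-1}. Equivalently, n! · σ_{N,n} = C_{n-1}. -/

import Mathlib

/-- `esymm v N n`: the `n`-th elementary symmetric polynomial in
`v 0, …, v (N-1)`. -/
def esymm {R : Type*} [CommRing R] (v : ℕ → R) (N n : ℕ) : R :=
  ∑ t ∈ (Finset.range N).powersetCard n, ∏ k ∈ t, v k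

namespace EspAux
open Finset
variable {R : Type*} [CommRing R] [Algebra ℚ R]

/-- power sum -/
def ps (v : ℕ → R) (N m : ℕ) : R := ∑ d ∈ Finset.range N, v d ^ m

/-- signed power sum `q_m = (-1)^(m+1) p_m` -/
def qs (v : ℕ → R) (N m : ℕ) : R := (-1 : R) ^ (m + 1) * ps v N m

lemma qs_succ (v : ℕ → R) (N m : ℕ) : qs v N (m+1) = (-1:R)^m * ps v N (m+1) := by
  simp only [qs, pow_succ]; ring

/-- signed complete homogeneous `h̃_m = (-1)^m h_m`, via Newton recursion -/
noncomputable def hs (v : ℕ → R) (N : ℕ) : ℕ → R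
  | 0 => 1
  | (m+1) => - (algebraMap ℚ R (1/(m+1)) *
      ∑ j ∈ Finset.range (m+1), qs v N (j+1) * hs v N (m - j))
  decreasing_by omega

lemma hs_newton (v : ℕ → R) (N M : ℕ) :
    (M : R) * hs v N M = - ∑ m ∈ Finset.range M, qs v N (m+1) * hs v N (M - 1 - m) := by
  cases M with
  | zero => simp
  | succ m =>
    rw [hs, mul_neg, neg_inj, ← mul_assoc]
    have h1 : ((m+1 : ℕ) : R) * algebraMap ℚ R (1/(m+1)) = 1 := by
      rw [show ((m+1:ℕ):R) = algebraMap ℚ R ((m+1:ℕ):ℚ) by simp, ← map_mul]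
      rw [show ((m+1:ℕ):ℚ) * (1/(m+1)) = 1 by push_cast; field_simp]
      simp
    rw [h1, one_mul]
    congr 1

lemma neg_one_pow_congr {a b : ℕ} (h : a % 2 = b % 2) : (-1:R)^a = (-1:R)^b := by
  rw [← Nat.div_add_mod a 2, ← Nat.div_add_mod b 2, pow_add, pow_add, pow_mul, pow_mul]
  simp [neg_one_sq, h]

lemma aeval_esymm (v : ℕ → R) (N k : ℕ) :
    MvPolynomial.aeval (fun i : Fin N => v i) (MvPolynomial.esymm (Fin N) ℚ k) = esymm v N k := by
  rw [MvPolynomial.esymm, map_sum]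
  have hmap : (Finset.range N).powersetCard k
      = ((Finset.univ.powersetCard k : Finset (Finset (Fin N)))).map
          (Finset.mapEmbedding Fin.valEmbedding).toEmbedding := by
    rw [← Finset.powersetCard_map, Fin.map_valEmbedding_univ, Nat.Iio_eq_range]
  rw [esymm, hmap, Finset.sum_map]
  refine Finset.sum_congr rfl fun t _ => ?_
  rw [map_prod, RelEmbedding.coe_toEmbedding, Finset.mapEmbedding_apply, Finset.prod_map]
  simp [MvPolynomial.aeval_X, Fin.valEmbedding_apply]

lemma aeval_psum (v : ℕ → R) (N m : ℕ) :
    MvPolynomial.aeval (fun i : Fin N => v i) (MvPolynomial.psum (Fin N) ℚ m) = ps v N m := by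
  rw [MvPolynomial.psum, map_sum, ps, ← Fin.sum_univ_eq_sum_range (fun d => v d ^ m)]
  simp

lemma es_newton (v : ℕ → R) (N k : ℕ) :
    (k : R) * esymm v N k
      = ∑ m ∈ Finset.range k, (-1:R)^m * esymm v N (k - (m+1)) * ps v N (m+1) := by
  have H := MvPolynomial.mul_esymm_eq_sum (Fin N) ℚ k
  have H2 := congrArg (MvPolynomial.aeval (fun i : Fin N => v i)) H
  simp only [map_mul, map_sum, map_pow, map_natCast, map_neg, map_one,
    aeval_esymm, aeval_psum] at H2
  rw [H2, Finset.sum_filter, Finset.Nat.sum_antidiagonal_eq_sum_range_succ_mk,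
    Finset.sum_range_succ, if_neg (lt_irrefl k), add_zero]
  have : ∀ j ∈ Finset.range k, (if j < k then (-1:R)^j * esymm v N j * ps v N (k-j) else 0)
      = (-1:R)^j * esymm v N j * ps v N (k-j) := fun j hj => if_pos (Finset.mem_range.mp hj)
  rw [Finset.sum_congr rfl this, Finset.mul_sum, ← Finset.sum_range_reflect]
  refine Finset.sum_congr rfl fun m hm => ?_
  rw [Finset.mem_range] at hm
  have h1 : (-1:R)^(k+1) * (-1:R)^(k-1-m) = (-1:R)^m := by
    rw [← pow_add]; exact neg_one_pow_congr (by omega)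
  have h2 : k - (k-1-m) = m + 1 := by omega
  have h3 : k - 1 - m = k - (m+1) := by omega
  rw [h2, ← h3, ← mul_assoc, ← mul_assoc, h1]

lemma es_newton_q (v : ℕ → R) (N k : ℕ) :
    (k : R) * esymm v N k
      = ∑ m ∈ Finset.range k, qs v N (m+1) * esymm v N (k - (m+1)) := by
  rw [es_newton]
  refine Finset.sum_congr rfl fun m _ => ?_
  rw [qs_succ]; ring

/-- triangle sum swap -/
lemma tri (n : ℕ) (F : ℕ → ℕ → R) :
    ∑ x ∈ Finset.range n, ∑ y ∈ Finset.range (n - x), F x y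
      = ∑ y ∈ Finset.range n, ∑ x ∈ Finset.range (n - y), F x y := by
  rw [← Finset.sum_range_diag_flip n (fun a b => F a b),
      ← Finset.sum_range_diag_flip n (fun a b => F b a)]
  refine Finset.sum_congr rfl fun m hm => ?_
  rw [← Finset.sum_range_reflect (fun k => F k (m - k)) (m+1)]
  refine Finset.sum_congr rfl fun k hk => ?_
  rw [Finset.mem_range] at hk
  congr 1 <;> omega

/-- the `e`-`h̃` orthogonality (Cauchy identity): for `s ≥ 1`,
`∑ e_k h̃_{s-k} = 0`. -/
lemma N2 (v : ℕ → R) (N : ℕ) (s : ℕ) (hs1 : 1 ≤ s) :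
    ∑ k ∈ Finset.range (s+1), esymm v N k * hs v N (s - k) = 0 := by
  set c : R := ∑ k ∈ Finset.range (s+1), esymm v N k * hs v N (s - k) with hc
  have hmain : (s : R) * c = 0 := by
    have hsplit : (s : R) * c
        = (∑ k ∈ Finset.range (s+1), ((k:R) * esymm v N k) * hs v N (s-k))
          + ∑ k ∈ Finset.range (s+1), esymm v N k * ((((s-k : ℕ)):R) * hs v N (s-k)) := by
      rw [hc, Finset.mul_sum, ← Finset.sum_add_distrib]
      refine Finset.sum_congr rfl fun k hk => ?_
      rw [Finset.mem_range] at hk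
      have : (s : R) = (k : R) + ((s - k : ℕ) : R) := by
        rw [show ((s-k:ℕ):R) = ((s:R) - (k:R)) by
          rw [Nat.cast_sub (by omega)]]
        ring
      rw [this]; ring
    rw [hsplit]
    -- rewrite both summands with the Newton identities
    have h1 : (∑ k ∈ Finset.range (s+1), ((k:R) * esymm v N k) * hs v N (s-k))
        = ∑ a ∈ Finset.range s, ∑ b ∈ Finset.range (s - a),
            qs v N (a+1) * esymm v N b * hs v N (s-1-a-b) := by
      have e1 : ∀ k ∈ Finset.range (s+1), ((k:R) * esymm v N k) * hs v N (s-k)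
          = ∑ m ∈ Finset.range k, qs v N (m+1) * esymm v N (k-(m+1)) * hs v N (s-k) := by
        intro k _
        rw [es_newton_q, Finset.sum_mul]
      rw [Finset.sum_congr rfl e1, Finset.sum_range_succ']
      simp only [Finset.range_zero, Finset.sum_empty, add_zero]
      have step : ∑ k ∈ Finset.range s, ∑ m ∈ Finset.range (k+1),
            qs v N (m+1) * esymm v N (k+1-(m+1)) * hs v N (s-(k+1))
          = ∑ m ∈ Finset.range s, ∑ k ∈ Finset.range (m+1),
            (fun a b => qs v N (a+1) * esymm v N b * hs v N (s-1-(a+b))) k (m-k) := by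
        refine Finset.sum_congr rfl fun k hk => Finset.sum_congr rfl fun m hm => ?_
        rw [Finset.mem_range] at hk hm
        have i1 : k+1-(m+1) = k-m := by omega
        have i2 : s-(k+1) = s-1-(m+(k-m)) := by omega
        simp only []
        rw [i1, i2]
      rw [step, Finset.sum_range_diag_flip s
        (fun a b => qs v N (a+1) * esymm v N b * hs v N (s-1-(a+b)))]
      refine Finset.sum_congr rfl fun a ha => Finset.sum_congr rfl fun b hb => ?_
      rw [show s-1-(a+b) = s-1-a-b by omega]
    have h2 : (∑ k ∈ Finset.range (s+1), esymm v N k * ((((s-k : ℕ)):R) * hs v N (s-k)))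
        = - ∑ b ∈ Finset.range s, ∑ a ∈ Finset.range (s - b),
            qs v N (a+1) * esymm v N b * hs v N (s-1-a-b) := by
      have e2 : ∀ k ∈ Finset.range (s+1), esymm v N k * ((((s-k:ℕ)):R) * hs v N (s-k))
          = - ∑ m ∈ Finset.range (s-k), qs v N (m+1) * esymm v N k * hs v N (s-1-k-m) := by
        intro k _
        rw [hs_newton, mul_neg, ← Finset.sum_neg_distrib, Finset.mul_sum,
          ← Finset.sum_neg_distrib]
        refine Finset.sum_congr rfl fun m _ => ?_
        have : s - k - 1 - m = s - 1 - k - m := by omega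
        rw [this]; ring
      rw [Finset.sum_congr rfl e2, ← Finset.sum_neg_distrib, Finset.sum_range_succ]
      simp only [Nat.sub_self, Finset.range_zero, Finset.sum_empty, neg_zero, add_zero]
      refine Finset.sum_congr rfl fun b hb => congrArg Neg.neg
        (Finset.sum_congr rfl fun a ha => ?_)
      rw [show s-1-b-a = s-1-a-b by omega]
    rw [h1, h2, tri s (fun a b => qs v N (a+1) * esymm v N b * hs v N (s-1-a-b))]
    ring
  have : c = algebraMap ℚ R (((s:ℕ):ℚ)⁻¹) * ((s:R) * c) := by
    rw [← mul_assoc, show ((s:ℕ):R) = algebraMap ℚ R ((s:ℕ):ℚ) by simp, ← map_mul,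
      inv_mul_cancel₀ (show ((s:ℕ):ℚ) ≠ 0 by exact_mod_cast Nat.one_le_iff_ne_zero.mp hs1),
      map_one, one_mul]
  rw [this, hmain, mul_zero]


lemma hs_zero (v : ℕ → R) (N : ℕ) : hs v N 0 = 1 := by rw [hs]

lemma esymm_zero (v : ℕ → R) (N : ℕ) : esymm v N 0 = 1 := by simp [esymm]

/-- the auxiliary symmetric function `w_t = Σ_k (n-k)⁻¹ e_k h̃_{t-k}` -/
noncomputable def wf (v : ℕ → R) (N n t : ℕ) : R :=
  ∑ k ∈ Finset.range (t+1), algebraMap ℚ R (((n:ℚ) - k)⁻¹) * (esymm v N k * hs v N (t - k))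

lemma wf_zero (v : ℕ → R) (N n : ℕ) : wf v N n 0 = algebraMap ℚ R ((n:ℚ)⁻¹) := by
  simp [wf, hs_zero, esymm_zero]

/-- the key identity: `Σ_m q_{m+1} w_{s-1-m} = (n-s) w_s + [s=n] e_n`. -/
lemma keyK (v : ℕ → R) (N n : ℕ) (s : ℕ) (hs1 : 1 ≤ s) (hsn : s ≤ n) :
    ∑ m ∈ Finset.range s, qs v N (m+1) * wf v N n (s-1-m)
      = algebraMap ℚ R ((n:ℚ) - s) * wf v N n s
        + (if s = n then esymm v N n else 0) := by
  have step1 : ∑ m ∈ Finset.range s, qs v N (m+1) * wf v N n (s-1-m)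
      = ∑ m ∈ Finset.range s, ∑ k ∈ Finset.range (s-m),
          qs v N (m+1) * (algebraMap ℚ R (((n:ℚ) - k)⁻¹) * (esymm v N k * hs v N (s-1-m-k))) := by
    refine Finset.sum_congr rfl fun m hm => ?_
    rw [Finset.mem_range] at hm
    rw [wf, show s-1-m+1 = s-m by omega, Finset.mul_sum]
  rw [step1, tri s (fun m k =>
      qs v N (m+1) * (algebraMap ℚ R (((n:ℚ) - k)⁻¹) * (esymm v N k * hs v N (s-1-m-k))))]
  have step3 : ∀ k ∈ Finset.range s,
      ∑ m ∈ Finset.range (s-k),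
          qs v N (m+1) * (algebraMap ℚ R (((n:ℚ) - k)⁻¹) * (esymm v N k * hs v N (s-1-m-k)))
      = -(algebraMap ℚ R (((n:ℚ) - k)⁻¹) * (((s-k : ℕ):R) * (esymm v N k * hs v N (s-k)))) := by
    intro k hk
    rw [Finset.mem_range] at hk
    have hnewt := hs_newton v N (s-k)
    calc ∑ m ∈ Finset.range (s-k),
          qs v N (m+1) * (algebraMap ℚ R (((n:ℚ) - k)⁻¹) * (esymm v N k * hs v N (s-1-m-k)))
        = algebraMap ℚ R (((n:ℚ) - k)⁻¹) * (esymm v N k *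
            ∑ m ∈ Finset.range (s-k), qs v N (m+1) * hs v N ((s-k)-1-m)) := by
          rw [Finset.mul_sum, Finset.mul_sum]
          refine Finset.sum_congr rfl fun m hm => ?_
          rw [show (s-k)-1-m = s-1-m-k by omega]
          ring
      _ = algebraMap ℚ R (((n:ℚ) - k)⁻¹) * (esymm v N k *
            (-(((s-k : ℕ):R) * hs v N (s-k)))) := by
          rw [hnewt, neg_neg]
      _ = -(algebraMap ℚ R (((n:ℚ) - k)⁻¹) * (((s-k : ℕ):R) * (esymm v N k * hs v N (s-k)))) := by
          ring
  rw [Finset.sum_congr rfl step3]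
  -- extend sum to range (s+1); the extra term is 0 since s-s = 0
  have ext : ∑ k ∈ Finset.range s,
      -(algebraMap ℚ R (((n:ℚ) - k)⁻¹) * (((s-k : ℕ):R) * (esymm v N k * hs v N (s-k))))
      = ∑ k ∈ Finset.range (s+1),
      -(algebraMap ℚ R (((n:ℚ) - k)⁻¹) * (((s-k : ℕ):R) * (esymm v N k * hs v N (s-k)))) := by
    rw [Finset.sum_range_succ, Nat.sub_self]
    simp
  rw [ext]
  have combine : ∀ k ∈ Finset.range (s+1),
      -(algebraMap ℚ R (((n:ℚ) - k)⁻¹) * (((s-k : ℕ):R) * (esymm v N k * hs v N (s-k))))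
      = algebraMap ℚ R (((n:ℚ) - s) * ((n:ℚ) - k)⁻¹) * (esymm v N k * hs v N (s-k))
        + (-(esymm v N k * hs v N (s-k)) + (if k = n then esymm v N k * hs v N (s-k) else 0)) := by
    intro k hk
    rw [Finset.mem_range] at hk
    have hcast : (((s-k : ℕ)):R) = algebraMap ℚ R ((s:ℚ) - k) := by
      rw [show ((s:ℚ) - k) = (((s-k:ℕ)):ℚ) by push_cast [Nat.cast_sub (by omega : k ≤ s)]; ring]
      simp
    rw [hcast]
    by_cases hkn : k = n
    · subst hkn
      have hks : s = k := by omega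
      subst hks
      rw [if_pos rfl]
      simp
    · rw [if_neg hkn, add_zero]
      have hne : (n:ℚ) - k ≠ 0 := by
        have : (n:ℚ) ≠ (k:ℚ) := by exact_mod_cast fun h : n = k => hkn h.symm
        exact sub_ne_zero.mpr this
      have key : -(((n:ℚ) - k)⁻¹ * ((s:ℚ) - k)) = ((n:ℚ) - s) * ((n:ℚ) - k)⁻¹ + (-1) := by
        field_simp
        ring
      calc -(algebraMap ℚ R (((n:ℚ) - k)⁻¹) * (algebraMap ℚ R ((s:ℚ) - k)
              * (esymm v N k * hs v N (s-k))))
          = algebraMap ℚ R (-(((n:ℚ) - k)⁻¹ * ((s:ℚ) - k))) * (esymm v N k * hs v N (s-k)) := by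
            rw [map_neg, map_mul]; ring
        _ = algebraMap ℚ R (((n:ℚ) - s) * ((n:ℚ) - k)⁻¹ + (-1)) * (esymm v N k * hs v N (s-k)) := by
            rw [key]
        _ = algebraMap ℚ R (((n:ℚ) - s) * ((n:ℚ) - k)⁻¹) * (esymm v N k * hs v N (s-k))
              + -(esymm v N k * hs v N (s-k)) := by
            rw [map_add, add_mul, map_neg, map_one, neg_one_mul]
  rw [Finset.sum_congr rfl combine, Finset.sum_add_distrib, Finset.sum_add_distrib]
  have hN2 := N2 v N s hs1
  rw [show ∑ k ∈ Finset.range (s+1), -(esymm v N k * hs v N (s-k))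
      = -∑ k ∈ Finset.range (s+1), esymm v N k * hs v N (s-k) by rw [Finset.sum_neg_distrib],
    hN2, neg_zero, zero_add]
  rw [Finset.sum_ite_eq' (Finset.range (s+1)) n (fun k => esymm v N k * hs v N (s-k))]
  congr 1
  · rw [wf, Finset.mul_sum]
    refine Finset.sum_congr rfl fun k hk => ?_
    rw [map_mul, mul_assoc]
  · by_cases hsn' : s = n
    · subst hsn'
      rw [if_pos (by simp), if_pos rfl, Nat.sub_self, hs_zero, mul_one]
    · rw [if_neg (by simp; omega), if_neg hsn']


/-- swap `Σ_d Σ_m` into power sums -/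
lemma sum_swap_ps (v : ℕ → R) (N n i : ℕ) :
    ∑ d ∈ Finset.range N, ∑ m ∈ Finset.range (i+1), (-1:R)^m * v d ^ (m+1) * wf v N n (i-m)
      = ∑ m ∈ Finset.range (i+1), qs v N (m+1) * wf v N n (i-m) := by
  rw [Finset.sum_comm]
  refine Finset.sum_congr rfl fun m _ => ?_
  rw [qs_succ, ps]
  have : ∀ d ∈ Finset.range N, (-1:R)^m * v d ^ (m+1) * wf v N n (i-m)
      = ((-1:R)^m * v d ^ (m+1)) * wf v N n (i-m) := fun d _ => by ring
  rw [Finset.sum_congr rfl this, ← Finset.sum_mul, ← Finset.mul_sum]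

end EspAux

/-- The recursive ESP formula (Theorem 2.1): with `f 0 d = v d`,
`C i = Σ_d f i d` and `f i (v_d) = v_d (C_{i-1} − (n−i) f_{i-1}(v_d))`,
one has `n! · σ_{N,n} = C_{n-1}`. -/
theorem esp_recursion {R : Type*} [CommRing R] [Algebra ℚ R]
    (N n : ℕ) (hn1 : 1 ≤ n) (hnN : n ≤ N) (v : ℕ → R)
    (f : ℕ → ℕ → R) (C : ℕ → R)
    (hf0 : ∀ d, f 0 d = v d)
    (hC : ∀ i, C i = ∑ d ∈ Finset.range N, f i d)
    (hf : ∀ i d, f (i + 1) d = v d * (C i - ((n - (i + 1) : ℕ) : R) * f i d)) :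
    (n.factorial : R) * esymm v N n = C (n - 1) := by
  classical
  open EspAux in
  -- closed form for `f i`
  have claimA : ∀ i, i ≤ n - 1 → ∀ d, f i d
      = algebraMap ℚ R ((n.factorial : ℚ) / (((n-1-i).factorial : ℕ) : ℚ))
        * ∑ m ∈ Finset.range (i+1), (-1:R)^m * v d ^ (m+1) * EspAux.wf v N n (i-m) := by
    intro i
    induction i with
    | zero =>
      intro _ d
      rw [hf0]
      have hrw : ∑ m ∈ Finset.range (0+1), (-1:R)^m * v d ^ (m+1) * EspAux.wf v N n (0-m)
          = v d * algebraMap ℚ R ((n:ℚ)⁻¹) := by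
        rw [Finset.sum_range_one]
        simp [EspAux.wf_zero]
      rw [hrw]
      have hfact : (n.factorial : ℚ) / (((n-1).factorial : ℕ) : ℚ) * (n:ℚ)⁻¹ = 1 := by
        have h1 : (n:ℚ) * ((n-1).factorial : ℕ) = (n.factorial : ℚ) := by
          exact_mod_cast congrArg (Nat.cast : ℕ → ℚ) (Nat.mul_factorial_pred (by omega))
        have h2 : ((n-1).factorial : ℚ) ≠ 0 := by positivity
        have h3 : (n:ℚ) ≠ 0 := by positivity
        field_simp
        linarith [h1]
      calc v d = algebraMap ℚ R ((n.factorial : ℚ) / (((n-1).factorial : ℕ) : ℚ) * (n:ℚ)⁻¹)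
            * v d := by rw [hfact, map_one, one_mul]
        _ = algebraMap ℚ R ((n.factorial : ℚ) / (((n-1).factorial : ℕ) : ℚ))
            * (v d * algebraMap ℚ R ((n:ℚ)⁻¹)) := by rw [map_mul]; ring
    | succ i IH =>
      intro hi1 d
      have hi : i ≤ n - 1 := by omega
      -- closed form for C i
      have hCi : C i = algebraMap ℚ R ((n.factorial : ℚ) / (((n-1-i).factorial : ℕ) : ℚ))
          * (algebraMap ℚ R ((n:ℚ) - ((i+1 : ℕ) : ℚ)) * EspAux.wf v N n (i+1)) := by
        rw [hC i, Finset.sum_congr rfl (fun d' _ => IH hi d'), ← Finset.mul_sum,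
          EspAux.sum_swap_ps v N n i]
        have hK := EspAux.keyK v N n (i+1) (by omega) (by omega)
        have hne : ¬ (i+1 = n) := by omega
        rw [if_neg hne, add_zero] at hK
        rw [show (∑ m ∈ Finset.range (i+1), EspAux.qs v N (m+1) * EspAux.wf v N n (i-m))
            = ∑ m ∈ Finset.range (i+1), EspAux.qs v N (m+1) * EspAux.wf v N n (i+1-1-m) from rfl,
          hK]
      -- assemble
      have hcast : ((n - (i+1) : ℕ) : R) = algebraMap ℚ R ((n:ℚ) - ((i+1 : ℕ) : ℚ)) := by
        rw [show ((n:ℚ) - ((i+1 : ℕ) : ℚ)) = (((n-(i+1):ℕ)):ℚ) by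
          push_cast [Nat.cast_sub (by omega : i+1 ≤ n)]; ring]
        simp
      have hAB : algebraMap ℚ R ((n.factorial : ℚ) / (((n-1-i).factorial : ℕ) : ℚ))
            * algebraMap ℚ R ((n:ℚ) - ((i+1 : ℕ) : ℚ))
          = algebraMap ℚ R ((n.factorial : ℚ) / (((n-1-(i+1)).factorial : ℕ) : ℚ)) := by
        rw [← map_mul]
        congr 1
        have e1 : (n-1-i) = (n-1-(i+1)) + 1 := by omega
        have e2 : (((n-1-i).factorial : ℕ) : ℚ)
            = ((n:ℚ) - ((i+1 : ℕ) : ℚ)) * (((n-1-(i+1)).factorial : ℕ) : ℚ) := by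
          rw [e1, Nat.factorial_succ]
          push_cast
          rw [show ((n-1-(i+1) : ℕ) : ℚ) = (n:ℚ) - ((i:ℚ)+1) - 1 + 1 - 1 by
            rw [Nat.cast_sub (by omega : i+1 ≤ n-1), Nat.cast_sub (by omega : 1 ≤ n)]
            push_cast; ring]
          ring
        have h2 : (((n-1-(i+1)).factorial : ℕ) : ℚ) ≠ 0 := by positivity
        have h3 : (n:ℚ) - ((i+1 : ℕ) : ℚ) ≠ 0 := by
          have : ((i+1 : ℕ) : ℚ) < (n : ℚ) := by exact_mod_cast (by omega : i+1 < n)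
          intro h; linarith
        rw [e2, div_mul_eq_mul_div,
          mul_comm ((n:ℚ) - ((i+1 : ℕ) : ℚ)) ((((n-1-(i+1)).factorial : ℕ)) : ℚ)]
        exact mul_div_mul_right _ _ h3
      rw [hf i d, hCi, IH hi d, Finset.sum_range_succ' _ (i+1)]
      simp only [pow_zero, one_mul, pow_one, Nat.sub_zero]
      have hsum : ∀ m ∈ Finset.range (i+1),
          (-1:R)^(m+1) * v d ^ ((m+1)+1) * EspAux.wf v N n (i+1-(m+1))
          = -(v d * ((-1:R)^m * v d ^ (m+1) * EspAux.wf v N n (i-m))) := by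
        intro m _
        rw [show i+1-(m+1) = i-m by omega, pow_succ, pow_succ]
        ring
      rw [Finset.sum_congr rfl hsum, Finset.sum_neg_distrib, ← Finset.mul_sum, hcast]
      set A := algebraMap ℚ R ((n.factorial : ℚ) / (((n-1-i).factorial : ℕ) : ℚ))
      set B := algebraMap ℚ R ((n:ℚ) - ((i+1 : ℕ) : ℚ))
      set A' := algebraMap ℚ R ((n.factorial : ℚ) / (((n-1-(i+1)).factorial : ℕ) : ℚ))
      set W := EspAux.wf v N n (i+1)
      set S := ∑ m ∈ Finset.range (i+1), (-1:R)^m * v d ^ (m+1) * EspAux.wf v N n (i-m)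
      calc v d * (A * (B * W) - B * (A * S))
          = (A * B) * (v d * W) - (A * B) * (v d * S) := by ring
        _ = A' * (-(v d * S) + v d * W) := by rw [hAB]; ring
        _ = A' * (-(v d * S) + v d ^ (0+1) * W) := by ring
  -- conclude at i = n-1
  have hfin : ∀ d ∈ Finset.range N, f (n-1) d
      = algebraMap ℚ R ((n.factorial : ℚ) / (((n-1-(n-1)).factorial : ℕ) : ℚ))
        * ∑ m ∈ Finset.range ((n-1)+1), (-1:R)^m * v d ^ (m+1) * EspAux.wf v N n ((n-1)-m) :=
    fun d _ => claimA (n-1) le_rfl d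
  rw [hC (n-1), Finset.sum_congr rfl hfin, ← Finset.mul_sum, EspAux.sum_swap_ps v N n (n-1)]
  have hK := EspAux.keyK v N n ((n-1)+1) (by omega) (by omega)
  rw [show (n-1)+1 = n by omega] at hK
  rw [show (∑ m ∈ Finset.range ((n-1)+1), EspAux.qs v N (m+1) * EspAux.wf v N n ((n-1)-m))
      = ∑ m ∈ Finset.range n, EspAux.qs v N (m+1) * EspAux.wf v N n (n-1-m) by
        rw [show (n-1)+1 = n by omega], hK]
  rw [if_pos rfl, sub_self, map_zero, zero_mul, zero_add]
  rw [show n-1-(n-1) = 0 by omega, Nat.factorial_zero]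
  rw [show (((1:ℕ)):ℚ) = 1 by norm_num, div_one]
  rw [show algebraMap ℚ R ((n.factorial : ℚ)) = ((n.factorial : ℕ) : R) by
    rw [show ((n.factorial : ℕ) : R) = algebraMap ℚ R (((n.factorial : ℕ)) : ℚ) by simp]]
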